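/- For each fixed (s,t) ∈ [0,T]²_⋆ and each 1 ≤ i,j ≤ d, almost surely Λ^{−,ij}(ε,δ;s,t) → W^{ij}(s,t) + H(2H−1)|t−s|^{2H−2} δ_{ij} as (ε,δ) ↓ 0 jointly, where Λ^{−,ij}(ε,δ;s,t) is the jointly measurable Gaussian-regression version of (1/(εδ)) E[B^{(i)}_{s,s+ε} B^{(j)}_{t,t+δ} | σ(B_s,B_t)]. -/

import Mathlib

open MeasureTheory ProbabilityTheory Real Filter Set Topology

noncomputable section

/-- Fractional Brownian motion covariance `R(s,t) = (t^{2H} + s^{2H} - |t-s|^{2H})/2`. -/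
def fbmR (H s t : ℝ) : ℝ := (t ^ (2*H) + s ^ (2*H) - |t - s| ^ (2*H)) / 2

/-- Variance `v(s) = s^{2H}`. -/
def fbmV (H s : ℝ) : ℝ := s ^ (2*H)

/-- `Θ_{s,t} = v(s)v(t) - R(s,t)²`. -/
def fbmTheta (H s t : ℝ) : ℝ := fbmV H s * fbmV H t - (fbmR H s t)^2

/-- `B` is a `d`-dimensional fractional Brownian motion with Hurst parameter `H` under `P`:
jointly measurable coordinates, and every finite linear combination of coordinates is a
centered Gaussian with the prescribed covariance `E[B^i_s B^j_t] = R(s,t) δ_{ij}`. -/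
structure IsFBM {Ω : Type*} [MeasurableSpace Ω] (P : Measure Ω) (H : ℝ) (d : ℕ)
    (B : Fin d → ℝ → Ω → ℝ) : Prop where
  isProb : IsProbabilityMeasure P
  meas : ∀ i, Measurable (Function.uncurry (B i))
  gaussian : ∀ (n : ℕ) (a : Fin n → ℝ) (i : Fin n → Fin d) (t : Fin n → ℝ),
      (∀ k, 0 ≤ t k) →
      P.map (fun ω => ∑ k, a k * B (i k) (t k) ω) =
        gaussianReal 0 (Real.toNNReal (∑ k, ∑ l,
          a k * a l * (if i k = i l then fbmR H (t k) (t l) else 0)))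

/-- `n₁₁(ε,s) = R(s,s+ε) − v(s)`. -/
def fbmN11 (H ε s : ℝ) : ℝ := fbmR H s (s+ε) - fbmV H s
/-- `n₁₂(ε,s,t) = R(s+ε,t) − R(s,t)`. -/
def fbmN12 (H ε s t : ℝ) : ℝ := fbmR H (s+ε) t - fbmR H s t
/-- `n₂₁(δ,s,t) = R(s,t+δ) − R(s,t)`. -/
def fbmN21 (H δ s t : ℝ) : ℝ := fbmR H s (t+δ) - fbmR H s t
/-- `n₂₂(δ,t) = R(t+δ,t) − v(t)`. -/
def fbmN22 (H δ t : ℝ) : ℝ := fbmR H (t+δ) t - fbmV H t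

/-- `λ₁₁(ε,s,t)`. -/
def lam11e (H ε s t : ℝ) : ℝ :=
  (fbmTheta H s t)⁻¹ * (fbmN11 H ε s * fbmV H t - fbmN12 H ε s t * fbmR H s t)
/-- `λ₁₂(ε,s,t)`. -/
def lam12e (H ε s t : ℝ) : ℝ :=
  (fbmTheta H s t)⁻¹ * (fbmN12 H ε s t * fbmV H s - fbmN11 H ε s * fbmR H s t)
/-- `λ₂₁(δ,s,t)`. -/
def lam21e (H δ s t : ℝ) : ℝ :=
  (fbmTheta H s t)⁻¹ * (fbmN21 H δ s t * fbmV H t - fbmN22 H δ t * fbmR H s t)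
/-- `λ₂₂(δ,s,t)`. -/
def lam22e (H δ s t : ℝ) : ℝ :=
  (fbmTheta H s t)⁻¹ * (fbmN22 H δ t * fbmV H s - fbmN21 H δ s t * fbmR H s t)

/-- `Z^{1;i}_{s,t}(ε) = λ₁₁(ε,s,t) B^i_s + λ₁₂(ε,s,t) B^i_t`. -/
def Z1 {Ω : Type*} {d : ℕ} (B : Fin d → ℝ → Ω → ℝ) (H : ℝ) (i : Fin d)
    (ε s t : ℝ) (ω : Ω) : ℝ :=
  lam11e H ε s t * B i s ω + lam12e H ε s t * B i t ω

/-- `Z^{2;j}_{s,t}(δ) = λ₂₁(δ,s,t) B^j_s + λ₂₂(δ,s,t) B^j_t`. -/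
def Z2 {Ω : Type*} {d : ℕ} (B : Fin d → ℝ → Ω → ℝ) (H : ℝ) (j : Fin d)
    (δ s t : ℝ) (ω : Ω) : ℝ :=
  lam21e H δ s t * B j s ω + lam22e H δ s t * B j t ω

/-- The jointly measurable version `Λ^{-,ij}(ε,δ;s,t)` of the projection operator. -/
def LambdaMinus {Ω : Type*} [MeasurableSpace Ω] (P : Measure Ω) {d : ℕ}
    (B : Fin d → ℝ → Ω → ℝ) (H : ℝ) (i j : Fin d) (ε δ s t : ℝ) (ω : Ω) : ℝ :=
  (Z1 B H i ε s t ω * Z2 B H j δ s t ω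
    - ∫ ω', Z1 B H i ε s t ω' * Z2 B H j δ s t ω' ∂P) / (ε*δ)
  + (∫ ω', (B i (s+ε) ω' - B i s ω') * (B j (t+δ) ω' - B j t ω') ∂P) / (ε*δ)

/-- `R_s(s,t) = H s^{2H−1} + H sgn(t−s)|t−s|^{2H−1}`. -/
def fbmRs (H s t : ℝ) : ℝ := H * s ^ (2*H-1) + H * Real.sign (t-s) * |t-s| ^ (2*H-1)
/-- `R_t(s,t) = H t^{2H−1} − H sgn(t−s)|t−s|^{2H−1}`. -/
def fbmRt (H s t : ℝ) : ℝ := H * t ^ (2*H-1) - H * Real.sign (t-s) * |t-s| ^ (2*H-1)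

/-- `λ₁₁(s,t)`. -/
def lam11 (H s t : ℝ) : ℝ :=
  (fbmTheta H s t)⁻¹ * (H * s ^ (2*H-1) * fbmV H t - fbmR H s t * fbmRs H s t)
/-- `λ₁₂(s,t)`. -/
def lam12 (H s t : ℝ) : ℝ :=
  (fbmTheta H s t)⁻¹ * (fbmRs H s t * fbmV H s - fbmR H s t * (H * s ^ (2*H-1)))
/-- `λ₂₁(s,t)`. -/
def lam21 (H s t : ℝ) : ℝ :=
  (fbmTheta H s t)⁻¹ * (fbmRt H s t * fbmV H t - fbmR H s t * (H * t ^ (2*H-1)))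
/-- `λ₂₂(s,t)`. -/
def lam22 (H s t : ℝ) : ℝ :=
  (fbmTheta H s t)⁻¹ * (H * t ^ (2*H-1) * fbmV H s - fbmR H s t * fbmRt H s t)

/-- The random field `W^{ij}(s,t)`. -/
def Wfield {Ω : Type*} {d : ℕ} (B : Fin d → ℝ → Ω → ℝ) (H : ℝ) (i j : Fin d)
    (s t : ℝ) (ω : Ω) : ℝ :=
  lam11 H s t * lam21 H s t * (B i s ω * B j s ω - if i = j then fbmV H s else 0)
  + lam11 H s t * lam22 H s t * (B i s ω * B j t ω - if i = j then fbmR H s t else 0)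
  + lam12 H s t * lam21 H s t * (B i t ω * B j s ω - if i = j then fbmR H s t else 0)
  + lam12 H s t * lam22 H s t * (B i t ω * B j t ω - if i = j then fbmV H t else 0)

/-- `Λ(s,t) = W(s,t) + H(2H−1)|t−s|^{2H−2} I_{d×d}`. -/
def LambdaField {Ω : Type*} {d : ℕ} (B : Fin d → ℝ → Ω → ℝ) (H : ℝ) (i j : Fin d)
    (s t : ℝ) (ω : Ω) : ℝ :=
  Wfield B H i j s t ω + if i = j then H * (2*H-1) * |t-s| ^ (2*H-2) else 0

/-- Frobenius norm on `ℝ^{d×d}`. -/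
def frobNorm {d : ℕ} (M : Fin d → Fin d → ℝ) : ℝ := Real.sqrt (∑ i, ∑ j, (M i j)^2)

end


section AuxProb
open scoped NNReal ENNReal


lemma integral_sq_mul_exp_neg_mul_sq {b : ℝ} (hb : 0 < b) :
    ∫ x : ℝ, x ^ 2 * Real.exp (-b * x ^ 2) = (2*b)⁻¹ * Real.sqrt (π / b) := by
  set F : ℝ → ℝ := fun x => -(2*b)⁻¹ * (x * Real.exp (-b * x^2)) with hF
  have hderiv : ∀ x : ℝ, HasDerivAt F
      (x ^ 2 * Real.exp (-b * x ^ 2) - (2*b)⁻¹ * Real.exp (-b * x^2)) x := by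
    intro x
    have h1 : HasDerivAt (fun x : ℝ => -b * x^2) (-b * (2*x)) x := by
      simpa using ((hasDerivAt_pow 2 x).const_mul (-b))
    have h2 : HasDerivAt (fun x : ℝ => Real.exp (-b * x^2))
        (Real.exp (-b * x^2) * (-b * (2*x))) x := h1.exp
    have h3 : HasDerivAt (fun x : ℝ => x * Real.exp (-b * x^2))
        (1 * Real.exp (-b * x^2) + x * (Real.exp (-b * x^2) * (-b * (2*x)))) x :=
      (hasDerivAt_id x).mul h2
    have h4 := h3.const_mul (-(2*b)⁻¹)
    refine h4.congr_deriv (Eq.symm ?_)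
    have hb0 : b ≠ 0 := hb.ne'
    field_simp
    ring
  have hint_sq : Integrable (fun x : ℝ => x ^ 2 * Real.exp (-b * x^2)) := by
    have := integrable_rpow_mul_exp_neg_mul_sq hb (s := 2) (by norm_num)
    simpa [Real.rpow_natCast] using this
  have hint_exp : Integrable (fun x : ℝ => Real.exp (-b * x^2)) := integrable_exp_neg_mul_sq hb
  have hint_F' : Integrable (fun x : ℝ =>
      x ^ 2 * Real.exp (-b * x ^ 2) - (2*b)⁻¹ * Real.exp (-b * x^2)) :=
    hint_sq.sub (hint_exp.const_mul _)
  have hcocompact : Tendsto F (cocompact ℝ) (𝓝 0) := by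
    have h0 := tendsto_rpow_abs_mul_exp_neg_mul_sq_cocompact hb 1
    have h1 : Tendsto (fun x : ℝ => x * Real.exp (-b * x^2)) (cocompact ℝ) (𝓝 0) := by
      rw [tendsto_zero_iff_norm_tendsto_zero]
      refine h0.congr fun x => ?_
      simp [abs_mul, Real.abs_exp, Real.rpow_one]
    simpa [hF] using h1.const_mul (-(2*b)⁻¹)
  have htop : Tendsto F atTop (𝓝 0) := hcocompact.mono_left _root_.atTop_le_cocompact
  have hbot : Tendsto F atBot (𝓝 0) := hcocompact.mono_left _root_.atBot_le_cocompact
  have hIoi : ∫ x in Ioi (0:ℝ),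
      (x ^ 2 * Real.exp (-b * x ^ 2) - (2*b)⁻¹ * Real.exp (-b * x^2)) = 0 - F 0 := by
    refine integral_Ioi_of_hasDerivAt_of_tendsto
      ((hderiv 0).continuousAt.continuousWithinAt) (fun x _ => hderiv x)
      (hint_F'.integrableOn) htop
  have hIic : ∫ x in Iic (0:ℝ),
      (x ^ 2 * Real.exp (-b * x ^ 2) - (2*b)⁻¹ * Real.exp (-b * x^2)) = F 0 - 0 := by
    refine integral_Iic_of_hasDerivAt_of_tendsto
      ((hderiv 0).continuousAt.continuousWithinAt) (fun x _ => hderiv x)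
      (hint_F'.integrableOn) hbot
  have hsplit := intervalIntegral.integral_Iic_add_Ioi (b := (0:ℝ))
    (hint_F'.integrableOn) (hint_F'.integrableOn)
  have hzero : ∫ x : ℝ, (x ^ 2 * Real.exp (-b * x ^ 2) - (2*b)⁻¹ * Real.exp (-b * x^2)) = 0 := by
    rw [← hsplit, hIoi, hIic]; ring
  have hsub := integral_sub hint_sq (hint_exp.const_mul ((2*b)⁻¹))
  rw [hsub] at hzero
  have hexp : ∫ x : ℝ, Real.exp (-b * x^2) = Real.sqrt (π / b) := integral_gaussian b
  have hconst : ∫ x : ℝ, (2*b)⁻¹ * Real.exp (-b * x^2) = (2*b)⁻¹ * Real.sqrt (π / b) := by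
    rw [integral_const_mul, hexp]
  linarith [hzero, hconst]

lemma gaussianPDFReal_zero_eq (v : ℝ≥0) (hv : v ≠ 0) :
    (fun x : ℝ => gaussianPDFReal 0 v x)
      = fun x => (Real.sqrt (2 * π * v))⁻¹ * Real.exp (-(2*(v:ℝ))⁻¹ * x ^ 2) := by
  funext x
  rw [gaussianPDFReal_def]
  simp only []
  rw [show (-(x - 0) ^ 2 / (2 * (v:ℝ))) = -(2*(v:ℝ))⁻¹ * x ^ 2 by ring]

lemma integrable_sq_gaussianReal (v : ℝ≥0) :
    Integrable (fun x : ℝ => x ^ 2) (gaussianReal 0 v) := by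
  by_cases hv : v = 0
  · subst hv
    rw [gaussianReal_zero_var]
    exact (integrable_const ((0:ℝ)^2)).congr (ae_eq_dirac fun x : ℝ => x^2).symm
  · have hv0 : (0:ℝ) < v := NNReal.coe_pos.mpr (pos_iff_ne_zero.mpr hv)
    have hb : (0:ℝ) < (2*(v:ℝ))⁻¹ := by positivity
    rw [gaussianReal_of_var_ne_zero 0 hv, gaussianPDF_def]
    rw [integrable_withDensity_iff ((measurable_gaussianPDFReal 0 v).ennreal_ofReal) (Eventually.of_forall fun x => ENNReal.ofReal_lt_top)]
    have : (fun x : ℝ => x ^ 2 * (ENNReal.ofReal (gaussianPDFReal 0 v x)).toReal)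
        = fun x => (Real.sqrt (2 * π * v))⁻¹ * (x ^ 2 * Real.exp (-(2*(v:ℝ))⁻¹ * x ^ 2)) := by
      funext x
      rw [ENNReal.toReal_ofReal (gaussianPDFReal_nonneg 0 v x)]
      rw [congrFun (gaussianPDFReal_zero_eq v hv) x]
      ring
    rw [this]
    have hint_sq : Integrable (fun x : ℝ => x ^ 2 * Real.exp (-(2*(v:ℝ))⁻¹ * x^2)) := by
      have := integrable_rpow_mul_exp_neg_mul_sq hb (s := 2) (by norm_num)
      simpa [Real.rpow_natCast] using this
    exact hint_sq.const_mul _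

lemma integral_sq_gaussianReal (v : ℝ≥0) :
    ∫ x : ℝ, x ^ 2 ∂(gaussianReal 0 v) = v := by
  by_cases hv : v = 0
  · subst hv
    rw [gaussianReal_zero_var, integral_dirac]
    norm_num
  · have hv0 : (0:ℝ) < v := NNReal.coe_pos.mpr (pos_iff_ne_zero.mpr hv)
    have hb : (0:ℝ) < (2*(v:ℝ))⁻¹ := by positivity
    rw [gaussianReal_of_var_ne_zero 0 hv, gaussianPDF_def]
    have hmeas : Measurable fun x : ℝ => (gaussianPDFReal 0 v x).toNNReal :=
      (measurable_gaussianPDFReal 0 v).real_toNNReal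
    have hco : (fun x : ℝ => ENNReal.ofReal (gaussianPDFReal 0 v x))
        = fun x => ((gaussianPDFReal 0 v x).toNNReal : ℝ≥0∞) := rfl
    rw [hco, integral_withDensity_eq_integral_smul hmeas]
    have : (fun x : ℝ => (gaussianPDFReal 0 v x).toNNReal • x ^ 2)
        = fun x => (Real.sqrt (2 * π * v))⁻¹ * (x ^ 2 * Real.exp (-(2*(v:ℝ))⁻¹ * x ^ 2)) := by
      funext x
      rw [NNReal.smul_def, smul_eq_mul, Real.coe_toNNReal _ (gaussianPDFReal_nonneg 0 v x),
        congrFun (gaussianPDFReal_zero_eq v hv) x]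
      ring
    rw [this, integral_const_mul, integral_sq_mul_exp_neg_mul_sq hb]
    have h1 : ((2 * ((2:ℝ)*(v:ℝ))⁻¹)⁻¹ : ℝ) = v := by
      field_simp
    have h2 : Real.sqrt (π / (2*(v:ℝ))⁻¹) = Real.sqrt (2 * π * v) := by
      congr 1
      field_simp
    have h3 : Real.sqrt (2*π*(v:ℝ)) ≠ 0 := ne_of_gt (Real.sqrt_pos.mpr (by positivity))
    rw [h1, h2, mul_comm (v:ℝ), ← mul_assoc, inv_mul_cancel₀ h3, one_mul]


variable {Ω : Type*} [MeasurableSpace Ω] {P : Measure Ω} {d : ℕ} {B : Fin d → ℝ → Ω → ℝ} {H : ℝ}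

lemma sq_moment {f : Ω → ℝ} (hf : Measurable f)
    {v : ℝ≥0} (hmap : P.map f = gaussianReal 0 v) :
    Integrable (fun ω => (f ω)^2) P ∧ ∫ ω, (f ω)^2 ∂P = v := by
  have hg : Integrable (fun x : ℝ => x^2) (P.map f) := by
    rw [hmap]; exact integrable_sq_gaussianReal v
  have hint : Integrable (fun ω => (f ω)^2) P :=
    (integrable_map_measure (by fun_prop) hf.aemeasurable).mp hg
  refine ⟨hint, ?_⟩
  have h2 := integral_map (μ := P) (φ := f) (f := fun x : ℝ => x^2) hf.aemeasurable (by fun_prop)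
  rw [hmap, integral_sq_gaussianReal] at h2
  exact h2.symm

lemma IsFBM.measB (hB : IsFBM P H d B) (i : Fin d) (a : ℝ) :
    Measurable (fun ω => B i a ω) :=
  (hB.meas i).comp measurable_prodMk_left

lemma fbmR_symm (H a b : ℝ) : fbmR H a b = fbmR H b a := by
  unfold fbmR; rw [abs_sub_comm]; ring

lemma fbmR_self (hp : (1:ℝ) < 2*H) (a : ℝ) : fbmR H a a = fbmV H a := by
  unfold fbmR fbmV
  rw [sub_self, abs_zero, Real.zero_rpow (by linarith)]
  ring

lemma fbmR_self_nonneg (hp : (1:ℝ) < 2*H) {a : ℝ} (ha : 0 ≤ a) : 0 ≤ fbmR H a a := by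
  rw [fbmR_self hp]; exact Real.rpow_nonneg ha _

lemma IsFBM.map_pair (hB : IsFBM P H d B) (i j : Fin d) {a b : ℝ} (ha : 0 ≤ a) (hb : 0 ≤ b)
    (α β : ℝ) :
    P.map (fun ω => α * B i a ω + β * B j b ω) =
      gaussianReal 0 (Real.toNNReal
        (α*α*(fbmR H a a) + α*β*(if i = j then fbmR H a b else 0)
          + β*α*(if i = j then fbmR H a b else 0) + β*β*(fbmR H b b))) := by
  have := hB.gaussian 2 ![α, β] ![i, j] ![a, b] (by
    intro k; fin_cases k
    · simpa using ha
    · simpa using hb)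
  have hfun : (fun ω => ∑ k, ![α, β] k * B (![i, j] k) (![a, b] k) ω)
      = (fun ω => α * B i a ω + β * B j b ω) := by
    funext ω; simp [Fin.sum_univ_two]
  have hvar : (∑ k, ∑ l, ![α, β] k * ![α, β] l *
        (if ![i, j] k = ![i, j] l then fbmR H (![a, b] k) (![a, b] l) else 0))
      = α*α*(fbmR H a a) + α*β*(if i = j then fbmR H a b else 0)
          + β*α*(if i = j then fbmR H a b else 0) + β*β*(fbmR H b b) := by
    by_cases h : i = j
    · subst h
      simp [Fin.sum_univ_two, fbmR_symm H b a]
      ring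
    · simp [Fin.sum_univ_two, h, Ne.symm h]
  rw [hfun, hvar] at this
  exact this

lemma IsFBM.cov (hB : IsFBM P H d B) (hp : (1:ℝ) < 2*H) (i j : Fin d) {a b : ℝ}
    (ha : 0 ≤ a) (hb : 0 ≤ b) :
    Integrable (fun ω => B i a ω * B j b ω) P ∧
      ∫ ω, B i a ω * B j b ω ∂P = (if i = j then fbmR H a b else 0) := by
  set X : Ω → ℝ := fun ω => B i a ω with hX
  set Y : Ω → ℝ := fun ω => B j b ω with hY
  set c : ℝ := if i = j then fbmR H a b else 0 with hc
  have hmX : Measurable X := hB.measB i a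
  have hmY : Measurable Y := hB.measB j b
  -- moments of X, Y, X+Y
  have habs : |b - a| ^ (2*H) ≤ a ^ (2*H) + b ^ (2*H) := by
    have h1 : |b - a| ≤ max a b := by
      rw [abs_sub_le_iff]; constructor <;>
        [exact sub_le_iff_le_add.mpr (le_add_of_le_of_nonneg (le_max_right a b) ha);
         exact sub_le_iff_le_add.mpr (le_add_of_le_of_nonneg (le_max_left a b) hb)]
    calc |b - a| ^ (2*H) ≤ (max a b) ^ (2*H) :=
          Real.rpow_le_rpow (abs_nonneg _) h1 (by linarith)
      _ ≤ a ^ (2*H) + b ^ (2*H) := by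
          rcases max_cases a b with ⟨h, _⟩ | ⟨h, _⟩ <;> rw [h]
          · exact le_add_of_le_of_nonneg le_rfl (Real.rpow_nonneg hb _)
          · exact le_add_of_nonneg_left (Real.rpow_nonneg ha _)
  have hcle : fbmR H a a + fbmR H b b + 2*c ≥ 0 := by
    rw [hc, fbmR_self hp, fbmR_self hp]
    unfold fbmV
    by_cases h : i = j
    · rw [if_pos h]
      unfold fbmR
      have h1 := Real.rpow_nonneg ha (2*H)
      have h2 := Real.rpow_nonneg hb (2*H)
      linarith [habs]
    · rw [if_neg h]
      have := Real.rpow_nonneg ha (2*H)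
      have := Real.rpow_nonneg hb (2*H)
      linarith
  have hXm := sq_moment hmX (by
    simpa [one_mul, zero_mul, add_zero, mul_zero] using hB.map_pair i j ha hb 1 0)
  have hYm := sq_moment hmY (by
    simpa [one_mul, zero_mul, add_zero, mul_zero, zero_add] using hB.map_pair i j ha hb 0 1)
  have hSm := sq_moment (f := fun ω => X ω + Y ω) (hmX.add hmY) (by
    simpa [one_mul] using hB.map_pair i j ha hb 1 1)
  have hXv : ∫ ω, (X ω)^2 ∂P = fbmR H a a := by
    rw [hXm.2, Real.coe_toNNReal _ (by simpa using fbmR_self_nonneg hp ha)]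
  have hYv : ∫ ω, (Y ω)^2 ∂P = fbmR H b b := by
    rw [hYm.2, Real.coe_toNNReal _ (by simpa using fbmR_self_nonneg hp hb)]
  have hSv : ∫ ω, (X ω + Y ω)^2 ∂P = fbmR H a a + c + c + fbmR H b b := by
    rw [hSm.2, Real.coe_toNNReal _ (by rw [← hc]; linarith [hcle])]
  have hXY_eq : (fun ω => B i a ω * B j b ω)
      = fun ω => ((X ω + Y ω)^2 - (X ω)^2 - (Y ω)^2)/2 := by
    funext ω; rw [hX, hY]; ring
  have hS1 : Integrable (fun ω => (X ω + Y ω)^2) P := hSm.1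
  have h1 : Integrable (fun ω => (X ω + Y ω)^2 - X ω^2) P := hS1.sub hXm.1
  have h2 : Integrable (fun ω => (X ω + Y ω)^2 - X ω^2 - Y ω^2) P := h1.sub hYm.1
  have hint : Integrable (fun ω => B i a ω * B j b ω) P := by
    rw [hXY_eq]; exact h2.div_const 2
  refine ⟨hint, ?_⟩
  rw [hXY_eq]
  rw [integral_div, integral_sub h1 hYm.1, integral_sub hS1 hXm.1, hSv, hXv, hYv]
  ring

end AuxProb


section AuxAnal

lemma slope_right {f : ℝ → ℝ} {f' a : ℝ} (hf : HasDerivAt f f' a) :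
    Tendsto (fun ε => (f (a+ε) - f a)/ε) (𝓝[>] (0:ℝ)) (𝓝 f') := by
  have h0 : Tendsto (fun ε : ℝ => a + ε) (𝓝[>] (0:ℝ)) (𝓝[≠] a) := by
    apply tendsto_nhdsWithin_of_tendsto_nhds_of_eventually_within
    · have h1 : Tendsto (fun ε : ℝ => a + ε) (𝓝 (0:ℝ)) (𝓝 (a + 0)) :=
        (continuous_const.add continuous_id).continuousAt
      simpa using h1.mono_left nhdsWithin_le_nhds
    · filter_upwards [self_mem_nhdsWithin] with ε hε
      have : (0:ℝ) < ε := hε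
      simp only [mem_compl_iff, mem_singleton_iff]
      intro h; linarith [congrArg (· - a) h]
  have hs := (hasDerivAt_iff_tendsto_slope.mp hf).comp h0
  refine hs.congr fun ε => ?_
  show slope f a (a + ε) = _
  rw [slope_def_field, show a + ε - a = ε by ring]

lemma slope_left {f : ℝ → ℝ} {f' a : ℝ} (hf : HasDerivAt f f' a) :
    Tendsto (fun ε => (f (a-ε) - f a)/ε) (𝓝[>] (0:ℝ)) (𝓝 (-f')) := by
  have h0 : Tendsto (fun ε : ℝ => a - ε) (𝓝[>] (0:ℝ)) (𝓝[≠] a) := by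
    apply tendsto_nhdsWithin_of_tendsto_nhds_of_eventually_within
    · have h1 : Tendsto (fun ε : ℝ => a - ε) (𝓝 (0:ℝ)) (𝓝 (a - 0)) :=
        (continuous_const.sub continuous_id).continuousAt
      simpa using h1.mono_left nhdsWithin_le_nhds
    · filter_upwards [self_mem_nhdsWithin] with ε hε
      have : (0:ℝ) < ε := hε
      simp only [mem_compl_iff, mem_singleton_iff]
      intro h; linarith [congrArg (· - a) h]
  have hs := ((hasDerivAt_iff_tendsto_slope.mp hf).comp h0).neg
  refine hs.congr fun ε => ?_
  show -slope f a (a - ε) = _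
  rw [slope_def_field, show a - ε - a = -ε by ring]
  rw [div_neg, neg_neg]

lemma absRpow_hasDerivAt {p : ℝ} (hp : 1 < p) {x : ℝ} (hx : x ≠ 0) :
    HasDerivAt (fun y : ℝ => |y| ^ p) (p * Real.sign x * |x| ^ (p-1)) x := by
  rcases hx.lt_or_gt with hneg | hpos
  · have h1 : HasDerivAt (fun y : ℝ => -y) (-1) x := (hasDerivAt_id x).neg
    have h2 := (Real.hasDerivAt_rpow_const (x := -x) (p := p)
      (Or.inl (neg_ne_zero.mpr hx))).comp x h1
    have heq : (fun y : ℝ => |y| ^ p) =ᶠ[𝓝 x] (fun y : ℝ => (-y) ^ p) := by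
      filter_upwards [Iio_mem_nhds hneg] with y hy
      rw [abs_of_neg hy]
    have h3 := h2.congr_of_eventuallyEq heq
    refine h3.congr_deriv (Eq.symm ?_)
    rw [Real.sign_of_neg hneg, abs_of_neg hneg]
    show p * (-1) * (-x) ^ (p-1) = p * (-x) ^ (p-1) * (-1)
    ring
  · have h2 := Real.hasDerivAt_rpow_const (x := x) (p := p) (Or.inl hx)
    have heq : (fun y : ℝ => |y| ^ p) =ᶠ[𝓝 x] (fun y : ℝ => y ^ p) := by
      filter_upwards [Ioi_mem_nhds hpos] with y hy
      rw [abs_of_pos hy]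
    have h3 := h2.congr_of_eventuallyEq heq
    refine h3.congr_deriv (Eq.symm ?_)
    rw [Real.sign_of_pos hpos, abs_of_pos hpos]
    ring

lemma signAbsRpow_hasDerivAt {p : ℝ} (hp : 1 < p) {x : ℝ} (hx : x ≠ 0) :
    HasDerivAt (fun y : ℝ => p * Real.sign y * |y| ^ (p-1)) (p * (p-1) * |x| ^ (p-2)) x := by
  rcases hx.lt_or_gt with hneg | hpos
  · have h1 : HasDerivAt (fun y : ℝ => -y) (-1) x := (hasDerivAt_id x).neg
    have h2 := (Real.hasDerivAt_rpow_const (x := -x) (p := p - 1)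
      (Or.inl (neg_ne_zero.mpr hx))).comp x h1
    have h3 := h2.const_mul (-p)
    have heq : (fun y : ℝ => p * Real.sign y * |y| ^ (p-1))
        =ᶠ[𝓝 x] (fun y : ℝ => -p * ((-y) ^ (p-1))) := by
      filter_upwards [Iio_mem_nhds hneg] with y hy
      rw [Real.sign_of_neg hy, abs_of_neg hy]; ring
    have h4 := h3.congr_of_eventuallyEq heq
    refine h4.congr_deriv (Eq.symm ?_)
    rw [abs_of_neg hneg, show p - 1 - 1 = p - 2 by ring]
    ring
  · have h2 := Real.hasDerivAt_rpow_const (x := x) (p := p - 1) (Or.inl hx)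
    have h3 := h2.const_mul p
    have heq : (fun y : ℝ => p * Real.sign y * |y| ^ (p-1))
        =ᶠ[𝓝 x] (fun y : ℝ => p * (y ^ (p-1))) := by
      filter_upwards [Ioi_mem_nhds hpos] with y hy
      rw [Real.sign_of_pos hy, abs_of_pos hy]; ring
    have h4 := h3.congr_of_eventuallyEq heq
    refine h4.congr_deriv (Eq.symm ?_)
    rw [abs_of_pos hpos, show p - 1 - 1 = p - 2 by ring]
    ring

lemma mixed_mvt {p : ℝ} (hp : 1 < p) {u : ℝ} (hu : u ≠ 0) {ε δ : ℝ} (hε : 0 < ε) (hδ : 0 < δ)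
    (hsum : ε + δ < |u| / 2) :
    ∃ η, |η - u| < ε + δ ∧
      |u-ε| ^ p + |u+δ| ^ p - |u+δ-ε| ^ p - |u| ^ p = ε * δ * (p*(p-1)*|η| ^ (p-2)) := by
  have hu0 : 0 < |u| := abs_pos.mpr hu
  have hne : ∀ x : ℝ, u - ε ≤ x → x ≤ u + δ → x ≠ 0 := by
    intro x h1 h2 h0
    rw [h0] at h1 h2
    have : |u| ≤ ε + δ := abs_le.mpr ⟨by linarith, by linarith⟩
    linarith
  set G1 : ℝ → ℝ := fun y => p * Real.sign y * |y| ^ (p-1) with hG1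
  set h : ℝ → ℝ := fun x => |x + δ| ^ p - |x| ^ p with hh
  have hd1 : ∀ x ∈ Icc (u-ε) u, HasDerivAt h (G1 (x+δ) - G1 x) x := by
    intro x hx
    have hx0 : x ≠ 0 := hne x hx.1 (by linarith [hx.2])
    have hxd0 : x + δ ≠ 0 := hne (x+δ) (by linarith [hx.1]) (by linarith [hx.2])
    have ha := (absRpow_hasDerivAt hp hxd0).comp x ((hasDerivAt_id x).add_const δ)
    have hb := absRpow_hasDerivAt hp hx0
    have := ha.sub hb
    simp only [mul_one, id_eq] at this
    exact this
  obtain ⟨ξ, hξ, hξeq⟩ := exists_hasDerivAt_eq_slope h (fun x => G1 (x+δ) - G1 x)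
      (by linarith : u - ε < u)
      (fun x hx => (hd1 x hx).continuousAt.continuousWithinAt)
      (fun x hx => hd1 x (Ioo_subset_Icc_self hx))
  have hd2 : ∀ x ∈ Icc ξ (ξ+δ), HasDerivAt G1 (p*(p-1)*|x| ^ (p-2)) x := by
    intro x hx
    exact signAbsRpow_hasDerivAt hp
      (hne x (by linarith [hξ.1, hx.1]) (by linarith [hξ.2, hx.2]))
  obtain ⟨η, hη, hηeq⟩ := exists_hasDerivAt_eq_slope G1 (fun x => p*(p-1)*|x| ^ (p-2))
      (by linarith : ξ < ξ + δ)
      (fun x hx => (hd2 x hx).continuousAt.continuousWithinAt)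
      (fun x hx => hd2 x (Ioo_subset_Icc_self hx))
  refine ⟨η, ?_, ?_⟩
  · rw [abs_lt]
    constructor
    · linarith [hξ.1, hη.1]
    · linarith [hξ.2, hη.2]
  · rw [show u - (u - ε) = ε by ring] at hξeq
    rw [show ξ + δ - ξ = δ by ring] at hηeq
    have e1 : h u - h (u - ε) = ε * (G1 (ξ+δ) - G1 ξ) := by
      rw [hξeq]; field_simp
    have e2 : G1 (ξ+δ) - G1 ξ = δ * (p*(p-1)*|η| ^ (p-2)) := by
      rw [hηeq]; field_simp
    have e3 : |u-ε| ^ p + |u+δ| ^ p - |u+δ-ε| ^ p - |u| ^ p = h u - h (u-ε) := by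
      simp only [hh]
      rw [show u - ε + δ = u + δ - ε by ring]
      ring
    rw [e3, e1, e2]; ring

lemma mixed_tendsto {p : ℝ} (hp : 1 < p) {u : ℝ} (hu : u ≠ 0) :
    Tendsto (fun ed : ℝ × ℝ =>
        (|u-ed.1| ^ p + |u+ed.2| ^ p - |u+ed.2-ed.1| ^ p - |u| ^ p) / (ed.1*ed.2))
      ((𝓝[>] (0:ℝ)) ×ˢ (𝓝[>] (0:ℝ))) (𝓝 (p*(p-1)*|u| ^ (p-2))) := by
  have hu0 : 0 < |u| := abs_pos.mpr hu
  rw [Metric.tendsto_nhds]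
  intro ε' hε'
  have hcont : ContinuousAt (fun x : ℝ => p*(p-1)*|x| ^ (p-2)) u := by
    have h1 : ContinuousAt (fun x : ℝ => x ^ (p-2)) |u| :=
      Real.continuousAt_rpow_const _ _ (Or.inl (ne_of_gt hu0))
    exact (h1.comp continuous_abs.continuousAt).const_mul _
  obtain ⟨r0, hr0, hball⟩ := Metric.continuousAt_iff.mp hcont ε' hε'
  set r := min r0 (|u|/2) with hrdef
  have hrpos : 0 < r := lt_min hr0 (by linarith)
  have hmem : (Ioo (0:ℝ) (r/2)) ×ˢ (Ioo (0:ℝ) (r/2)) ∈ (𝓝[>] (0:ℝ)) ×ˢ (𝓝[>] (0:ℝ)) :=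
    prod_mem_prod (Ioo_mem_nhdsGT_of_mem ⟨le_refl 0, by linarith⟩)
      (Ioo_mem_nhdsGT_of_mem ⟨le_refl 0, by linarith⟩)
  filter_upwards [hmem] with ed hed
  obtain ⟨⟨hε1, hε2⟩, hδ1, hδ2⟩ := hed
  have hrle : r ≤ |u|/2 := min_le_right _ _
  have hrle0 : r ≤ r0 := min_le_left _ _
  have hsum : ed.1 + ed.2 < |u|/2 := by linarith
  obtain ⟨η, hηd, hηeq⟩ := mixed_mvt hp hu hε1 hδ1 hsum
  rw [hηeq, mul_div_cancel_left₀ _ (by positivity : ed.1 * ed.2 ≠ 0)]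
  apply hball
  rw [Real.dist_eq]
  linarith

end AuxAnal

section AuxLam
variable {H : ℝ}

lemma tendsto_rpow_zero_right {q : ℝ} (hq : 0 < q) :
    Tendsto (fun ε : ℝ => ε ^ q) (𝓝[>] (0:ℝ)) (𝓝 0) := by
  have h1 : ContinuousAt (fun x : ℝ => x ^ q) 0 :=
    Real.continuousAt_rpow_const _ _ (Or.inr hq.le)
  have h2 := h1.tendsto.mono_left (nhdsWithin_le_nhds (s := Ioi (0:ℝ)))
  rwa [Real.zero_rpow (ne_of_gt hq)] at h2

lemma tendsto_N11 (hp : (1:ℝ) < 2*H) {s : ℝ} (hs0 : 0 < s) :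
    Tendsto (fun ε => fbmN11 H ε s / ε) (𝓝[>] (0:ℝ)) (𝓝 (H * s ^ (2*H-1))) := by
  have hslope := slope_right (Real.hasDerivAt_rpow_const (x := s) (p := 2*H) (Or.inl hs0.ne'))
  have hpow := tendsto_rpow_zero_right (q := 2*H-1) (by linarith)
  have h2 := (hslope.sub hpow).div_const 2
  rw [show (2*H*s^(2*H-1) - 0)/2 = H * s^(2*H-1) by ring] at h2
  refine h2.congr' ?_
  filter_upwards [self_mem_nhdsWithin] with ε hε
  have hε0 : (0:ℝ) < ε := hε
  have hD : ε ^ (2*H-1) * ε = ε ^ (2*H) := by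
    rw [Real.rpow_sub_one (ne_of_gt hε0)]
    field_simp
  unfold fbmN11 fbmR fbmV
  rw [show s + ε - s = ε by ring, abs_of_pos hε0, ← hD]
  field_simp
  ring

lemma tendsto_N22 (hp : (1:ℝ) < 2*H) {t : ℝ} (ht0 : 0 < t) :
    Tendsto (fun δ => fbmN22 H δ t / δ) (𝓝[>] (0:ℝ)) (𝓝 (H * t ^ (2*H-1))) := by
  have hslope := slope_right (Real.hasDerivAt_rpow_const (x := t) (p := 2*H) (Or.inl ht0.ne'))
  have hpow := tendsto_rpow_zero_right (q := 2*H-1) (by linarith)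
  have h2 := (hslope.sub hpow).div_const 2
  rw [show (2*H*t^(2*H-1) - 0)/2 = H * t^(2*H-1) by ring] at h2
  refine h2.congr' ?_
  filter_upwards [self_mem_nhdsWithin] with δ hδ
  have hδ0 : (0:ℝ) < δ := hδ
  have hD : δ ^ (2*H-1) * δ = δ ^ (2*H) := by
    rw [Real.rpow_sub_one (ne_of_gt hδ0)]
    field_simp
  unfold fbmN22 fbmR fbmV
  rw [show t - (t + δ) = -δ by ring, abs_neg, abs_of_pos hδ0, ← hD]
  field_simp
  ring

lemma tendsto_N12 (hp : (1:ℝ) < 2*H) {s t : ℝ} (hs0 : 0 < s) (hst : s ≠ t) :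
    Tendsto (fun ε => fbmN12 H ε s t / ε) (𝓝[>] (0:ℝ)) (𝓝 (fbmRs H s t)) := by
  have hu : t - s ≠ 0 := sub_ne_zero.mpr (Ne.symm hst)
  have hslope := slope_right (Real.hasDerivAt_rpow_const (x := s) (p := 2*H) (Or.inl hs0.ne'))
  have hG := slope_left (absRpow_hasDerivAt hp hu)
  have h2 := (hslope.sub hG).div_const 2
  have hval : (2*H*s^(2*H-1) - -(2*H * Real.sign (t-s) * |t-s| ^ (2*H-1)))/2
      = fbmRs H s t := by
    unfold fbmRs; ring
  rw [hval] at h2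
  refine h2.congr' ?_
  filter_upwards [self_mem_nhdsWithin] with ε hε
  unfold fbmN12 fbmR
  rw [show t - (s + ε) = t - s - ε by ring]
  field_simp
  ring

lemma tendsto_N21 (hp : (1:ℝ) < 2*H) {s t : ℝ} (ht0 : 0 < t) (hst : s ≠ t) :
    Tendsto (fun δ => fbmN21 H δ s t / δ) (𝓝[>] (0:ℝ)) (𝓝 (fbmRt H s t)) := by
  have hu : t - s ≠ 0 := sub_ne_zero.mpr (Ne.symm hst)
  have hslope := slope_right (Real.hasDerivAt_rpow_const (x := t) (p := 2*H) (Or.inl ht0.ne'))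
  have hG := slope_right (absRpow_hasDerivAt hp hu)
  have h2 := (hslope.sub hG).div_const 2
  have hval : (2*H*t^(2*H-1) - 2*H * Real.sign (t-s) * |t-s| ^ (2*H-1))/2
      = fbmRt H s t := by
    unfold fbmRt; ring
  rw [hval] at h2
  refine h2.congr' ?_
  filter_upwards [self_mem_nhdsWithin] with δ hδ
  unfold fbmN21 fbmR
  rw [show t + δ - s = t - s + δ by ring]
  field_simp
  ring

lemma tendsto_lam11e (hp : (1:ℝ) < 2*H) {s t : ℝ} (hs0 : 0 < s) (hst : s ≠ t) :
    Tendsto (fun ε => lam11e H ε s t / ε) (𝓝[>] (0:ℝ)) (𝓝 (lam11 H s t)) := by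
  have h := (((tendsto_N11 hp hs0).mul_const (fbmV H t)).sub
    ((tendsto_N12 hp hs0 hst).mul_const (fbmR H s t))).const_mul (fbmTheta H s t)⁻¹
  rw [show (fbmTheta H s t)⁻¹ * (H * s ^ (2*H-1) * fbmV H t - fbmRs H s t * fbmR H s t)
    = lam11 H s t by unfold lam11; ring] at h
  refine h.congr fun ε => ?_
  unfold lam11e
  field_simp

lemma tendsto_lam12e (hp : (1:ℝ) < 2*H) {s t : ℝ} (hs0 : 0 < s) (hst : s ≠ t) :
    Tendsto (fun ε => lam12e H ε s t / ε) (𝓝[>] (0:ℝ)) (𝓝 (lam12 H s t)) := by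
  have h := (((tendsto_N12 hp hs0 hst).mul_const (fbmV H s)).sub
    ((tendsto_N11 hp hs0).mul_const (fbmR H s t))).const_mul (fbmTheta H s t)⁻¹
  rw [show (fbmTheta H s t)⁻¹ * (fbmRs H s t * fbmV H s - H * s ^ (2*H-1) * fbmR H s t)
    = lam12 H s t by unfold lam12; ring] at h
  refine h.congr fun ε => ?_
  unfold lam12e
  field_simp

lemma tendsto_lam21e (hp : (1:ℝ) < 2*H) {s t : ℝ} (ht0 : 0 < t) (hst : s ≠ t) :
    Tendsto (fun δ => lam21e H δ s t / δ) (𝓝[>] (0:ℝ)) (𝓝 (lam21 H s t)) := by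
  have h := (((tendsto_N21 hp ht0 hst).mul_const (fbmV H t)).sub
    ((tendsto_N22 hp ht0).mul_const (fbmR H s t))).const_mul (fbmTheta H s t)⁻¹
  rw [show (fbmTheta H s t)⁻¹ * (fbmRt H s t * fbmV H t - H * t ^ (2*H-1) * fbmR H s t)
    = lam21 H s t by unfold lam21; ring] at h
  refine h.congr fun δ => ?_
  unfold lam21e
  field_simp

lemma tendsto_lam22e (hp : (1:ℝ) < 2*H) {s t : ℝ} (ht0 : 0 < t) (hst : s ≠ t) :
    Tendsto (fun δ => lam22e H δ s t / δ) (𝓝[>] (0:ℝ)) (𝓝 (lam22 H s t)) := by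
  have h := (((tendsto_N22 hp ht0).mul_const (fbmV H s)).sub
    ((tendsto_N21 hp ht0 hst).mul_const (fbmR H s t))).const_mul (fbmTheta H s t)⁻¹
  rw [show (fbmTheta H s t)⁻¹ * (H * t ^ (2*H-1) * fbmV H s - fbmRt H s t * fbmR H s t)
    = lam22 H s t by unfold lam22; ring] at h
  refine h.congr fun δ => ?_
  unfold lam22e
  field_simp

end AuxLam

/-- For each fixed `(s,t) ∈ [0,T]²_⋆` and `1 ≤ i,j ≤ d`, almost surely
`Λ^{−,ij}(ε,δ;s,t) → W^{ij}(s,t) + H(2H−1)|t−s|^{2H−2} δ_{ij}` as `(ε,δ) ↓ 0` jointly. -/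
theorem statement4 {Ω : Type*} [MeasurableSpace Ω] (P : Measure Ω)
    (H : ℝ) (hH : H ∈ Set.Ioo (1/2 : ℝ) 1) (d : ℕ) (hd : 1 ≤ d)
    (T : ℝ) (hT : 0 < T) (B : Fin d → ℝ → Ω → ℝ) (hB : IsFBM P H d B)
    (s t : ℝ) (hs : s ∈ Set.Icc 0 T) (ht : t ∈ Set.Icc 0 T)
    (hst : s ≠ t) (hs0 : 0 < s) (ht0 : 0 < t) (i j : Fin d) :
    ∀ᵐ ω ∂P, Tendsto (fun ed : ℝ × ℝ => LambdaMinus P B H i j ed.1 ed.2 s t ω)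
      ((𝓝[>] (0:ℝ)) ×ˢ (𝓝[>] (0:ℝ)))
      (𝓝 (Wfield B H i j s t ω + if i = j then H * (2*H-1) * |t-s| ^ (2*H-2) else 0)) := by
  
  have hp : (1:ℝ) < 2*H := by linarith [hH.1]
  have hu : t - s ≠ 0 := sub_ne_zero.mpr (Ne.symm hst)
  have covP : ∀ (a b : ℝ), 0 ≤ a → 0 ≤ b →
      (Integrable (fun ω => B i a ω * B j b ω) P ∧
        ∫ ω, B i a ω * B j b ω ∂P = (if i = j then fbmR H a b else 0)) :=
    fun a b ha hb => hB.cov hp i j ha hb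
  have hZ : ∀ ε δ : ℝ, ∫ ω', Z1 B H i ε s t ω' * Z2 B H j δ s t ω' ∂P
      = lam11e H ε s t * lam21e H δ s t * (if i = j then fbmR H s s else 0)
      + lam11e H ε s t * lam22e H δ s t * (if i = j then fbmR H s t else 0)
      + lam12e H ε s t * lam21e H δ s t * (if i = j then fbmR H t s else 0)
      + lam12e H ε s t * lam22e H δ s t * (if i = j then fbmR H t t else 0) := by
    intro ε δ
    obtain ⟨iss, vss⟩ := covP s s hs0.le hs0.le
    obtain ⟨ist, vst⟩ := covP s t hs0.le ht0.le
    obtain ⟨its, vts⟩ := covP t s ht0.le hs0.le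
    obtain ⟨itt, vtt⟩ := covP t t ht0.le ht0.le
    have hfn : (fun ω' => Z1 B H i ε s t ω' * Z2 B H j δ s t ω') =
        fun ω' => lam11e H ε s t * lam21e H δ s t * (B i s ω' * B j s ω')
          + (lam11e H ε s t * lam22e H δ s t * (B i s ω' * B j t ω')
          + (lam12e H ε s t * lam21e H δ s t * (B i t ω' * B j s ω')
          + lam12e H ε s t * lam22e H δ s t * (B i t ω' * B j t ω'))) := by
      funext ω'; unfold Z1 Z2; ring
    have j1 : Integrable (fun ω' => lam11e H ε s t * lam21e H δ s t * (B i s ω' * B j s ω')) P :=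
      iss.const_mul _
    have j2 : Integrable (fun ω' => lam11e H ε s t * lam22e H δ s t * (B i s ω' * B j t ω')) P :=
      ist.const_mul _
    have j3 : Integrable (fun ω' => lam12e H ε s t * lam21e H δ s t * (B i t ω' * B j s ω')) P :=
      its.const_mul _
    have j4 : Integrable (fun ω' => lam12e H ε s t * lam22e H δ s t * (B i t ω' * B j t ω')) P :=
      itt.const_mul _
    have j34 : Integrable (fun ω' => lam12e H ε s t * lam21e H δ s t * (B i t ω' * B j s ω')
        + lam12e H ε s t * lam22e H δ s t * (B i t ω' * B j t ω')) P := j3.add j4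
    have j234 : Integrable (fun ω' => lam11e H ε s t * lam22e H δ s t * (B i s ω' * B j t ω')
        + (lam12e H ε s t * lam21e H δ s t * (B i t ω' * B j s ω')
          + lam12e H ε s t * lam22e H δ s t * (B i t ω' * B j t ω'))) P := j2.add j34
    rw [hfn, integral_add j1 j234, integral_add j2 j34, integral_add j3 j4,
      integral_const_mul, integral_const_mul, integral_const_mul, integral_const_mul,
      vss, vst, vts, vtt]
    ring
  have hInc : ∀ ε δ : ℝ, 0 < ε → 0 < δ →
      ∫ ω', (B i (s+ε) ω' - B i s ω') * (B j (t+δ) ω' - B j t ω') ∂P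
      = (if i = j then
          fbmR H (s+ε) (t+δ) - fbmR H (s+ε) t - fbmR H s (t+δ) + fbmR H s t else 0) := by
    intro ε δ hε hδ
    obtain ⟨i11, v11⟩ := covP (s+ε) (t+δ) (by linarith) (by linarith)
    obtain ⟨i10, v10⟩ := covP (s+ε) t (by linarith) ht0.le
    obtain ⟨i01, v01⟩ := covP s (t+δ) hs0.le (by linarith)
    obtain ⟨i00, v00⟩ := covP s t hs0.le ht0.le
    have hfn : (fun ω' => (B i (s+ε) ω' - B i s ω') * (B j (t+δ) ω' - B j t ω')) =
        fun ω' => B i (s+ε) ω' * B j (t+δ) ω' - B i (s+ε) ω' * B j t ω'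
          - (B i s ω' * B j (t+δ) ω' - B i s ω' * B j t ω') := by
      funext ω'; ring
    have k1 : Integrable (fun ω' => B i (s+ε) ω' * B j (t+δ) ω' - B i (s+ε) ω' * B j t ω') P :=
      i11.sub i10
    have k2 : Integrable (fun ω' => B i s ω' * B j (t+δ) ω' - B i s ω' * B j t ω') P :=
      i01.sub i00
    rw [hfn, integral_sub k1 k2, integral_sub i11 i10, integral_sub i01 i00,
      v11, v10, v01, v00]
    by_cases h : i = j
    · simp only [if_pos h]; ring
    · simp only [if_neg h]; ring
  refine Eventually.of_forall (fun ω => ?_)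
  have t11 := tendsto_lam11e hp hs0 hst
  have t12 := tendsto_lam12e hp hs0 hst
  have t21 := tendsto_lam21e hp ht0 hst
  have t22 := tendsto_lam22e hp ht0 hst
  set l : Filter (ℝ × ℝ) := (𝓝[>] (0:ℝ)) ×ˢ (𝓝[>] (0:ℝ)) with hl
  have hfst : Tendsto (fun ed : ℝ × ℝ => ed.1) l (𝓝[>] (0:ℝ)) := tendsto_fst
  have hsnd : Tendsto (fun ed : ℝ × ℝ => ed.2) l (𝓝[>] (0:ℝ)) := tendsto_snd
  have hA : Tendsto (fun ed : ℝ × ℝ =>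
      (lam11e H ed.1 s t / ed.1) * (lam21e H ed.2 s t / ed.2) *
        (B i s ω * B j s ω - (if i = j then fbmR H s s else 0))
      + (lam11e H ed.1 s t / ed.1) * (lam22e H ed.2 s t / ed.2) *
        (B i s ω * B j t ω - (if i = j then fbmR H s t else 0))
      + (lam12e H ed.1 s t / ed.1) * (lam21e H ed.2 s t / ed.2) *
        (B i t ω * B j s ω - (if i = j then fbmR H t s else 0))
      + (lam12e H ed.1 s t / ed.1) * (lam22e H ed.2 s t / ed.2) *
        (B i t ω * B j t ω - (if i = j then fbmR H t t else 0)))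
      l (𝓝 (Wfield B H i j s t ω)) := by
    have e1 := (((t11.comp hfst).mul (t21.comp hsnd)).mul_const
      (B i s ω * B j s ω - (if i = j then fbmR H s s else 0)))
    have e2 := (((t11.comp hfst).mul (t22.comp hsnd)).mul_const
      (B i s ω * B j t ω - (if i = j then fbmR H s t else 0)))
    have e3 := (((t12.comp hfst).mul (t21.comp hsnd)).mul_const
      (B i t ω * B j s ω - (if i = j then fbmR H t s else 0)))
    have e4 := (((t12.comp hfst).mul (t22.comp hsnd)).mul_const
      (B i t ω * B j t ω - (if i = j then fbmR H t t else 0)))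
    have := ((e1.add e2).add e3).add e4
    have hval : lam11 H s t * lam21 H s t *
          (B i s ω * B j s ω - (if i = j then fbmR H s s else 0))
        + lam11 H s t * lam22 H s t *
          (B i s ω * B j t ω - (if i = j then fbmR H s t else 0))
        + lam12 H s t * lam21 H s t *
          (B i t ω * B j s ω - (if i = j then fbmR H t s else 0))
        + lam12 H s t * lam22 H s t *
          (B i t ω * B j t ω - (if i = j then fbmR H t t else 0))
        = Wfield B H i j s t ω := by
      simp only [fbmR_self hp, fbmR_symm H t s]
      unfold Wfield
      ring
    rw [hval] at this
    exact this
  have hC : Tendsto (fun ed : ℝ × ℝ => (if i = j then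
      ((fbmR H (s+ed.1) (t+ed.2) - fbmR H (s+ed.1) t - fbmR H s (t+ed.2) + fbmR H s t)
        / (ed.1*ed.2)) else 0)) l
      (𝓝 (if i = j then H*(2*H-1)*|t-s| ^ (2*H-2) else 0)) := by
    by_cases h : i = j
    · simp only [if_pos h]
      have hm := (mixed_tendsto hp hu).div_const 2
      rw [show (2*H*(2*H-1)*|t-s| ^ (2*H-2))/2 = H*(2*H-1)*|t-s| ^ (2*H-2) by ring] at hm
      refine hm.congr fun ed => ?_
      unfold fbmR
      rw [show t + ed.2 - (s + ed.1) = t - s + ed.2 - ed.1 by ring,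
        show t - (s + ed.1) = t - s - ed.1 by ring,
        show t + ed.2 - s = t - s + ed.2 by ring]
      ring
    · simp only [if_neg h]
      exact tendsto_const_nhds
  refine (hA.add hC).congr' ?_
  filter_upwards [prod_mem_prod self_mem_nhdsWithin self_mem_nhdsWithin] with ed hed
  obtain ⟨hε, hδ⟩ := hed
  have hε0 : (0:ℝ) < ed.1 := hε
  have hδ0 : (0:ℝ) < ed.2 := hδ
  unfold LambdaMinus
  rw [hZ ed.1 ed.2, hInc ed.1 ed.2 hε0 hδ0]
  unfold Z1 Z2
  by_cases h : i = j
  · simp only [if_pos h]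
    field_simp
    ring
  · simp only [if_neg h]
    field_simp
    ring
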